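/- Let R be a rooted binary phylogenetic network on X. If there exists a tree-child cherry-picking sequence associated with a complete cherry-reduction sequence for R, then R is tree-child. -/
import Mathlib


/-!  Formalisation preliminaries for rooted and unrooted binary phylogenetic
networks, cherry reductions, cherry-reduction sequences and cherry-picking
sequences, following Döcker & Linz. -/

/-- A finite directed graph whose vertices are natural numbers. -/
structure DNet where
  verts : Finset ℕ
  arcs : Finset (ℕ × ℕ)

namespace DNet

/-- in-degree of a vertex -/
def inDeg (N : DNet) (v : ℕ) : ℕ := (N.arcs.filter (fun p => p.2 = v)).card

/-- out-degree of a vertex -/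
def outDeg (N : DNet) (v : ℕ) : ℕ := (N.arcs.filter (fun p => p.1 = v)).card

/-- the arc relation -/
def Arc (N : DNet) (u v : ℕ) : Prop := (u, v) ∈ N.arcs

/-- the digraph has no directed cycle -/
def Acyclic (N : DNet) : Prop := ∀ v, ¬ Relation.TransGen N.Arc v v

/-- root: in-degree 0 and out-degree 2 -/
def IsRoot (N : DNet) (v : ℕ) : Prop := v ∈ N.verts ∧ N.inDeg v = 0 ∧ N.outDeg v = 2

/-- leaf: in-degree 1 and out-degree 0 -/
def IsLeaf (N : DNet) (v : ℕ) : Prop := v ∈ N.verts ∧ N.inDeg v = 1 ∧ N.outDeg v = 0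

/-- tree vertex: in-degree 1 and out-degree 2 -/
def IsTreeVertex (N : DNet) (v : ℕ) : Prop := v ∈ N.verts ∧ N.inDeg v = 1 ∧ N.outDeg v = 2

/-- reticulation: in-degree 2 and out-degree 1 -/
def IsRet (N : DNet) (v : ℕ) : Prop := v ∈ N.verts ∧ N.inDeg v = 2 ∧ N.outDeg v = 1

/-- the network consists of a single vertex -/
def SingleVertex (N : DNet) : Prop := N.verts.card = 1 ∧ N.arcs = ∅

/-- the reticulation number of a rooted network: number of in-degree-2 vertices -/
def retNum (N : DNet) : ℕ := (N.verts.filter (fun v => N.inDeg v = 2)).card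

/-- tree-child: every vertex with a child has a child that is a tree vertex or a leaf -/
def TreeChild (N : DNet) : Prop :=
  ∀ v ∈ N.verts, N.outDeg v ≠ 0 → ∃ c, (v, c) ∈ N.arcs ∧ (N.IsTreeVertex c ∨ N.IsLeaf c)

/-- a stack: two reticulations joined by an arc -/
def HasStack (N : DNet) : Prop := ∃ u v, N.IsRet u ∧ N.IsRet v ∧ (u, v) ∈ N.arcs

/-- a pair of sibling reticulations: two reticulations with a common parent -/
def HasSiblingRets (N : DNet) : Prop :=
  ∃ p u v, u ≠ v ∧ N.IsRet u ∧ N.IsRet v ∧ (p, u) ∈ N.arcs ∧ (p, v) ∈ N.arcs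

/-- stack-free -/
def StackFree (N : DNet) : Prop := ¬ N.HasStack

end DNet

/-- `N` is a rooted binary phylogenetic network with leaf set `X`
(including the degenerate single-vertex network when `|X| = 1`). -/
def IsRootedBinaryNet (N : DNet) (X : Finset ℕ) : Prop :=
  (∃ x, X = {x} ∧ N.verts = {x} ∧ N.arcs = ∅) ∨
  ((∀ p ∈ N.arcs, p.1 ∈ N.verts ∧ p.2 ∈ N.verts) ∧
   (∀ p ∈ N.arcs, p.1 ≠ p.2) ∧
   N.Acyclic ∧
   (∃! ρ, ρ ∈ N.verts ∧ N.inDeg ρ = 0) ∧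
   (∀ v ∈ N.verts, N.IsRoot v ∨ N.IsLeaf v ∨ N.IsTreeVertex v ∨ N.IsRet v) ∧
   (∀ v, N.IsLeaf v ↔ v ∈ X))

/-- `[a,b]` is a cherry of the rooted network `N` (with `a` the leaf to be deleted). -/
def RCherry (N : DNet) (a b : ℕ) : Prop :=
  a ≠ b ∧ N.IsLeaf a ∧ N.IsLeaf b ∧ ∃ p, (p, a) ∈ N.arcs ∧ (p, b) ∈ N.arcs

/-- `(a,b)` is a reticulated cherry of the rooted network `N` with reticulation leaf `a`:
the parent of `a` is a reticulation and receives an arc from the parent of `b`. -/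
def RRetCherry (N : DNet) (a b : ℕ) : Prop :=
  a ≠ b ∧ N.IsLeaf a ∧ N.IsLeaf b ∧
  ∃ pa pb, (pa, a) ∈ N.arcs ∧ (pb, b) ∈ N.arcs ∧ N.IsRet pa ∧ (pb, pa) ∈ N.arcs

/-- `M` is obtained from the rooted network `N` by reducing the cherry `[a,b]`:
delete `a` and suppress (or, if it is the root, delete) the resulting degree-2 vertex. -/
def RReduceCherry (N M : DNet) (a b : ℕ) : Prop :=
  RCherry N a b ∧
  ∃ p, (p, a) ∈ N.arcs ∧ (p, b) ∈ N.arcs ∧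
    ((N.inDeg p = 0 ∧ M.verts = N.verts \ {a, p} ∧ M.arcs = N.arcs \ {(p, a), (p, b)}) ∨
     (∃ g, (g, p) ∈ N.arcs ∧ M.verts = N.verts \ {a, p} ∧
        M.arcs = insert (g, b) (N.arcs \ {(g, p), (p, a), (p, b)})))

/-- `M` is obtained from the rooted network `N` by reducing the reticulated cherry `(a,b)`
with reticulation leaf `a`: delete the reticulation arc `(p_b, p_a)` and suppress the two
resulting degree-2 vertices. -/
def RReduceRetCherry (N M : DNet) (a b : ℕ) : Prop :=
  RRetCherry N a b ∧
  ∃ pa pb qa qb, (pa, a) ∈ N.arcs ∧ (pb, b) ∈ N.arcs ∧ N.IsRet pa ∧ (pb, pa) ∈ N.arcs ∧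
    (qa, pa) ∈ N.arcs ∧ qa ≠ pb ∧ (qb, pb) ∈ N.arcs ∧
    M.verts = N.verts \ {pa, pb} ∧
    M.arcs = insert (qa, a) (insert (qb, b)
      (N.arcs \ {(pb, pa), (pa, a), (qa, pa), (pb, b), (qb, pb)}))

/-- A recorded reduction: either a cherry pair `[x,y]` or a reticulated-cherry pair `(x,y)`
(the deleted leaf, resp. the reticulation leaf, is listed first). -/
inductive Pick where
  | cherry (x y : ℕ)
  | ret (x y : ℕ)
deriving DecidableEq

namespace Pick

/-- first coordinate -/
def fst : Pick → ℕ
  | cherry x _ => x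
  | ret x _ => x

/-- second coordinate -/
def snd : Pick → ℕ
  | cherry _ y => y
  | ret _ y => y

/-- the pair contains the element `z` -/
def Contains (r : Pick) (z : ℕ) : Prop := r.fst = z ∨ r.snd = z

/-- the pair is a reticulated-cherry pair -/
def IsRetPair : Pick → Prop
  | cherry _ _ => False
  | ret _ _ => True

/-- the pair is a cherry pair -/
def IsCherryPair : Pick → Prop
  | cherry _ _ => True
  | ret _ _ => False

end Pick

/-- The step from `N` to `M` is the cherry reduction recorded by the pick `r`
(rooted version). -/
def RStep (N M : DNet) : Pick → Prop
  | .cherry x y => RReduceCherry N M x y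
  | .ret x y => RReduceRetCherry N M x y

/-- `(Ns 0, …, Ns k)` is a cherry-reduction sequence of rooted networks whose associated
cherry-picking sequence is `(rs 0, …, rs (k-1))`. -/
def RCherrySeq (Ns : ℕ → DNet) (rs : ℕ → Pick) (k : ℕ) : Prop :=
  ∀ i < k, RStep (Ns i) (Ns (i + 1)) (rs i)

/-- `(Ns 0, …, Ns k)` is a cherry-reduction sequence of rooted networks. -/
def RReductionSeq (Ns : ℕ → DNet) (k : ℕ) : Prop :=
  ∀ i < k, ∃ r, RStep (Ns i) (Ns (i + 1)) r

/-- `R` is a rooted orchard network: it admits a complete cherry-reduction sequence. -/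
def Orchard (R : DNet) : Prop :=
  ∃ Ns k, Ns 0 = R ∧ RReductionSeq Ns k ∧ (Ns k).SingleVertex

/-- `j = s(i)`: the smallest index `j > i` (within the sequence of length `k`) such that
`rs j` contains the first coordinate of `rs i`. -/
def SuccAt (rs : ℕ → Pick) (k i j : ℕ) : Prop :=
  i < j ∧ j < k ∧ (rs j).Contains (rs i).fst ∧
  ∀ l, i < l → l < j → ¬ (rs l).Contains (rs i).fst

/-- Property (P1): the successor pair of every reticulated-cherry pair, if it exists,
is a cherry pair. -/
def SeqP1 (rs : ℕ → Pick) (k : ℕ) : Prop :=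
  ∀ i j, (rs i).IsRetPair → SuccAt rs k i j → (rs j).IsCherryPair

/-- Property (P2): no element of the sequence is the successor pair of two distinct
reticulated-cherry pairs. -/
def SeqP2 (rs : ℕ → Pick) (k : ℕ) : Prop :=
  ∀ i i' j, i ≠ i' → (rs i).IsRetPair → (rs i').IsRetPair →
    SuccAt rs k i j → SuccAt rs k i' j → False

/-- A tree-child cherry-picking sequence: one satisfying (P1) and (P2). -/
def TreeChildSeq (rs : ℕ → Pick) (k : ℕ) : Prop := SeqP1 rs k ∧ SeqP2 rs k

/-- Property (P3): the first coordinate of each pair does not occur as the second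
coordinate of any later pair. -/
def SeqP3 (rs : ℕ → Pick) (k : ℕ) : Prop :=
  ∀ i j, i < j → j < k → (rs i).fst ≠ (rs j).snd

/-- A finite undirected graph whose vertices are natural numbers. -/
structure UNet where
  verts : Finset ℕ
  edges : Finset (Sym2 ℕ)

namespace UNet

/-- degree of a vertex -/
def deg (U : UNet) (v : ℕ) : ℕ := (U.edges.filter (fun e => v ∈ e)).card

/-- adjacency -/
def Adj (U : UNet) (u v : ℕ) : Prop := u ≠ v ∧ s(u, v) ∈ U.edges

/-- connectedness -/
def Connected (U : UNet) : Prop :=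
  ∀ u ∈ U.verts, ∀ v ∈ U.verts, Relation.ReflTransGen U.Adj u v

/-- leaf: degree-1 vertex -/
def IsLeaf (U : UNet) (v : ℕ) : Prop := v ∈ U.verts ∧ U.deg v = 1

/-- the network consists of a single vertex -/
def SingleVertex (U : UNet) : Prop := U.verts.card = 1 ∧ U.edges = ∅

/-- the reticulation number of an unrooted network: `|E| - (|V| - 1)` -/
def retNum (U : UNet) : ℕ := U.edges.card - (U.verts.card - 1)

end UNet

/-- `U` is an unrooted binary phylogenetic network with leaf set `X`
(including the degenerate single-vertex network when `|X| = 1`). -/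
def IsUnrootedBinaryNet (U : UNet) (X : Finset ℕ) : Prop :=
  (∃ x, X = {x} ∧ U.verts = {x} ∧ U.edges = ∅) ∨
  ((∀ e ∈ U.edges, ¬ e.IsDiag ∧ ∀ v ∈ e, v ∈ U.verts) ∧
   U.Connected ∧
   (∀ v ∈ U.verts, U.deg v = 1 ∨ U.deg v = 3) ∧
   (∀ v, U.IsLeaf v ↔ v ∈ X))

/-- `[a,b]` is a cherry of the unrooted network `U`. -/
def UCherry (U : UNet) (a b : ℕ) : Prop :=
  a ≠ b ∧ U.IsLeaf a ∧ U.IsLeaf b ∧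
  ((∃ p, s(a, p) ∈ U.edges ∧ s(b, p) ∈ U.edges ∧ p ≠ a ∧ p ≠ b) ∨ U.edges = {s(a, b)})

/-- the edge `{u,v}` lies on a cycle of `U` -/
def UOnCycle (U : UNet) (u v : ℕ) : Prop :=
  s(u, v) ∈ U.edges ∧
  Relation.ReflTransGen (fun x y => x ≠ y ∧ s(x, y) ∈ U.edges ∧ s(x, y) ≠ s(u, v)) u v

/-- `(a,b)` is a reticulated cherry of the unrooted network `U` with reticulation
edge `{u,v}`. -/
def URetCherry (U : UNet) (a b : ℕ) : Prop :=
  a ≠ b ∧ U.IsLeaf a ∧ U.IsLeaf b ∧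
  ∃ u v, s(a, u) ∈ U.edges ∧ s(u, v) ∈ U.edges ∧ s(v, b) ∈ U.edges ∧
    u ≠ v ∧ u ≠ a ∧ v ≠ b ∧ UOnCycle U u v

/-- `W` is obtained from `U` by reducing the cherry `[a,b]`: delete `a` and, if `U` has
at least two edges, suppress the resulting degree-2 vertex. -/
def UReduceCherry (U W : UNet) (a b : ℕ) : Prop :=
  UCherry U a b ∧
  ((U.edges = {s(a, b)} ∧ W.verts = U.verts \ {a} ∧ W.edges = ∅) ∨
   (∃ p g, s(a, p) ∈ U.edges ∧ s(b, p) ∈ U.edges ∧ s(p, g) ∈ U.edges ∧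
      p ≠ a ∧ p ≠ b ∧ g ≠ a ∧ g ≠ b ∧ g ≠ p ∧
      W.verts = U.verts \ {a, p} ∧
      W.edges = insert s(b, g) (U.edges \ {s(a, p), s(b, p), s(p, g)})))

/-- `W` is obtained from `U` by reducing the reticulated cherry `(a,b)`: delete the
reticulation edge `{u,v}` and suppress the two resulting degree-2 vertices. -/
def UReduceRetCherry (U W : UNet) (a b : ℕ) : Prop :=
  URetCherry U a b ∧
  ∃ u v ga gb, s(a, u) ∈ U.edges ∧ s(u, v) ∈ U.edges ∧ s(v, b) ∈ U.edges ∧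
    u ≠ v ∧ u ≠ a ∧ v ≠ b ∧ UOnCycle U u v ∧
    s(u, ga) ∈ U.edges ∧ ga ≠ a ∧ ga ≠ v ∧ ga ≠ u ∧
    s(v, gb) ∈ U.edges ∧ gb ≠ b ∧ gb ≠ u ∧ gb ≠ v ∧
    W.verts = U.verts \ {u, v} ∧
    W.edges = insert s(a, ga) (insert s(b, gb)
      (U.edges \ {s(u, v), s(a, u), s(u, ga), s(v, b), s(v, gb)}))

/-- The step from `U` to `W` is the cherry reduction recorded by the pick `r`
(unrooted version). -/
def UStep (U W : UNet) : Pick → Prop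
  | .cherry x y => UReduceCherry U W x y
  | .ret x y => UReduceRetCherry U W x y

/-- `(Us 0, …, Us k)` is a cherry-reduction sequence of unrooted networks whose associated
cherry-picking sequence is `(rs 0, …, rs (k-1))`. -/
def UCherrySeq (Us : ℕ → UNet) (rs : ℕ → Pick) (k : ℕ) : Prop :=
  ∀ i < k, UStep (Us i) (Us (i + 1)) (rs i)

/-- `(Us 0, …, Us k)` is a cherry-reduction sequence of unrooted networks. -/
def UReductionSeq (Us : ℕ → UNet) (k : ℕ) : Prop :=
  ∀ i < k, ∃ r, UStep (Us i) (Us (i + 1)) r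

/-- The rooted network `R` is an orientation of the unrooted network `U`: `U` is obtained
from `R` by forgetting arc directions and suppressing the root. -/
def IsOrientationOf (R : DNet) (U : UNet) : Prop :=
  (R.arcs = ∅ ∧ U.edges = ∅ ∧ U.verts = R.verts) ∨
  (∃ ρ c₁ c₂, ρ ∈ R.verts ∧ R.inDeg ρ = 0 ∧ c₁ ≠ c₂ ∧
    (ρ, c₁) ∈ R.arcs ∧ (ρ, c₂) ∈ R.arcs ∧
    U.verts = R.verts.erase ρ ∧
    U.edges = insert s(c₁, c₂)
      ((R.arcs.filter (fun p => p.1 ≠ ρ)).image (fun p => s(p.1, p.2))))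

/-- `U` is an unrooted tree-child network on `X`: it has a tree-child orientation. -/
def UnrootedTreeChild (U : UNet) (X : Finset ℕ) : Prop :=
  ∃ R : DNet, IsRootedBinaryNet R X ∧ R.TreeChild ∧ IsOrientationOf R U

/-- The pick `r` is one of the picks associated with the recorded reduction `p`:
it must agree with `p` on cherry reductions, and may swap the two coordinates of a
reticulated-cherry reduction. -/
def PickAssoc : Pick → Pick → Prop
  | .cherry x y, r => r = .cherry x y
  | .ret x y, r => r = .ret x y ∨ r = .ret y x

/-- `X`-labelled isomorphism of unrooted networks. -/
def UIso (X : Finset ℕ) (U W : UNet) : Prop :=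
  ∃ f : ℕ → ℕ, Set.BijOn f ↑U.verts ↑W.verts ∧ (∀ x ∈ X, f x = x) ∧
    W.edges = U.edges.image (Sym2.map f)

namespace TCProof

open Relation

/-! ### Degree and fiber helper lemmas -/

lemma one_le_outDeg {N : DNet} {u v : ℕ} (h : (u, v) ∈ N.arcs) : 1 ≤ N.outDeg u := by
  have hm : (u, v) ∈ N.arcs.filter (fun p => p.1 = u) := Finset.mem_filter.2 ⟨h, rfl⟩
  exact Finset.card_pos.2 ⟨_, hm⟩

lemma one_le_inDeg {N : DNet} {u v : ℕ} (h : (u, v) ∈ N.arcs) : 1 ≤ N.inDeg v := by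
  have hm : (u, v) ∈ N.arcs.filter (fun p => p.2 = v) := Finset.mem_filter.2 ⟨h, rfl⟩
  exact Finset.card_pos.2 ⟨_, hm⟩

lemma two_le_outDeg {N : DNet} {u v w : ℕ} (h1 : (u, v) ∈ N.arcs) (h2 : (u, w) ∈ N.arcs)
    (hne : v ≠ w) : 2 ≤ N.outDeg u := by
  have hsub : ({(u, v), (u, w)} : Finset (ℕ × ℕ)) ⊆ N.arcs.filter (fun p => p.1 = u) := by
    intro q hq
    rcases Finset.mem_insert.1 hq with rfl | hq
    · exact Finset.mem_filter.2 ⟨h1, rfl⟩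
    · rw [Finset.mem_singleton] at hq; subst hq
      exact Finset.mem_filter.2 ⟨h2, rfl⟩
  have hc := Finset.card_le_card hsub
  rwa [Finset.card_pair (by simp [hne])] at hc

lemma two_le_inDeg {N : DNet} {u v w : ℕ} (h1 : (u, w) ∈ N.arcs) (h2 : (v, w) ∈ N.arcs)
    (hne : u ≠ v) : 2 ≤ N.inDeg w := by
  have hsub : ({(u, w), (v, w)} : Finset (ℕ × ℕ)) ⊆ N.arcs.filter (fun p => p.2 = w) := by
    intro q hq
    rcases Finset.mem_insert.1 hq with rfl | hq
    · exact Finset.mem_filter.2 ⟨h1, rfl⟩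
    · rw [Finset.mem_singleton] at hq; subst hq
      exact Finset.mem_filter.2 ⟨h2, rfl⟩
  have hc := Finset.card_le_card hsub
  rwa [Finset.card_pair (by simp [hne])] at hc

/-- unique out-neighbour when out-degree is 1 -/
lemma out_eq_of_outDeg_one {N : DNet} {p a x : ℕ} (hd : N.outDeg p = 1)
    (h1 : (p, a) ∈ N.arcs) (hx : (p, x) ∈ N.arcs) : x = a := by
  have h := Finset.card_le_one.1 (le_of_eq hd) _
    (Finset.mem_filter.2 ⟨hx, rfl⟩) _ (Finset.mem_filter.2 ⟨h1, rfl⟩)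
  exact (Prod.ext_iff.1 h).2

/-- unique in-neighbour when in-degree is 1 -/
lemma in_eq_of_inDeg_one {N : DNet} {a p q : ℕ} (hd : N.inDeg a = 1)
    (h1 : (p, a) ∈ N.arcs) (hx : (q, a) ∈ N.arcs) : q = p := by
  have h := Finset.card_le_one.1 (le_of_eq hd) _
    (Finset.mem_filter.2 ⟨hx, rfl⟩) _ (Finset.mem_filter.2 ⟨h1, rfl⟩)
  exact (Prod.ext_iff.1 h).1

lemma out_eq_of_outDeg_two {N : DNet} {p a b x : ℕ} (hd : N.outDeg p = 2)
    (h1 : (p, a) ∈ N.arcs) (h2 : (p, b) ∈ N.arcs) (hab : a ≠ b)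
    (hx : (p, x) ∈ N.arcs) : x = a ∨ x = b := by
  by_contra hcon
  push_neg at hcon
  have hsub : ({(p, a), (p, b), (p, x)} : Finset (ℕ × ℕ)) ⊆ N.arcs.filter (fun q => q.1 = p) := by
    intro q hq
    simp only [Finset.mem_insert, Finset.mem_singleton] at hq
    rcases hq with rfl | rfl | rfl
    · exact Finset.mem_filter.2 ⟨h1, rfl⟩
    · exact Finset.mem_filter.2 ⟨h2, rfl⟩
    · exact Finset.mem_filter.2 ⟨hx, rfl⟩
  have hc := Finset.card_le_card hsub
  have h3 : ({(p, a), (p, b), (p, x)} : Finset (ℕ × ℕ)).card = 3 := by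
    rw [Finset.card_insert_of_notMem (by simp [hab, Ne.symm hcon.1]),
      Finset.card_pair (by simp [Ne.symm hcon.2])]
  rw [h3] at hc
  simp only [DNet.outDeg, DNet.inDeg] at hd
  omega

lemma in_eq_of_inDeg_two {N : DNet} {p a b x : ℕ} (hd : N.inDeg p = 2)
    (h1 : (a, p) ∈ N.arcs) (h2 : (b, p) ∈ N.arcs) (hab : a ≠ b)
    (hx : (x, p) ∈ N.arcs) : x = a ∨ x = b := by
  by_contra hcon
  push_neg at hcon
  have hsub : ({(a, p), (b, p), (x, p)} : Finset (ℕ × ℕ)) ⊆ N.arcs.filter (fun q => q.2 = p) := by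
    intro q hq
    simp only [Finset.mem_insert, Finset.mem_singleton] at hq
    rcases hq with rfl | rfl | rfl
    · exact Finset.mem_filter.2 ⟨h1, rfl⟩
    · exact Finset.mem_filter.2 ⟨h2, rfl⟩
    · exact Finset.mem_filter.2 ⟨hx, rfl⟩
  have hc := Finset.card_le_card hsub
  have h3 : ({(a, p), (b, p), (x, p)} : Finset (ℕ × ℕ)).card = 3 := by
    rw [Finset.card_insert_of_notMem (by simp [hab, Ne.symm hcon.1]),
      Finset.card_pair (by simp [Ne.symm hcon.2])]
  rw [h3] at hc
  simp only [DNet.outDeg, DNet.inDeg] at hd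
  omega

lemma exists_other_child {N : DNet} {p a : ℕ} (hd : N.outDeg p = 2)
    (h1 : (p, a) ∈ N.arcs) : ∃ c, c ≠ a ∧ (p, c) ∈ N.arcs := by
  by_contra hcon
  push_neg at hcon
  have hsub : N.arcs.filter (fun q => q.1 = p) ⊆ {(p, a)} := by
    intro q hq
    obtain ⟨hq1, hq2⟩ := Finset.mem_filter.1 hq
    simp only [Finset.mem_singleton]
    obtain ⟨q1, q2⟩ := q
    simp only at hq2
    subst hq2
    by_cases h : q2 = a
    · subst h; rfl
    · exact absurd hq1 (hcon q2 h)
  have hc := Finset.card_le_card hsub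
  simp only [Finset.card_singleton] at hc
  unfold DNet.outDeg at hd
  omega

lemma transGen_lift {r s : ℕ → ℕ → Prop} (h : ∀ u v, r u v → TransGen s u v) {u v : ℕ}
    (huv : TransGen r u v) : TransGen s u v := by
  induction huv with
  | single hb => exact h _ _ hb
  | tail _ hb ih => exact ih.trans (h _ _ hb)

end TCProof
namespace TCProof

open Relation

/-! ### The working invariant `Net` -/

/-- Weak well-formedness invariant preserved by cherry reductions: arcs live on vertices,
no self-loops, acyclic, and every vertex has one of five admissible degree patterns. -/
def Net (N : DNet) : Prop :=
  (∀ p ∈ N.arcs, p.1 ∈ N.verts ∧ p.2 ∈ N.verts) ∧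
  (∀ p ∈ N.arcs, p.1 ≠ p.2) ∧
  N.Acyclic ∧
  (∀ v ∈ N.verts, (N.inDeg v = 0 ∧ N.outDeg v = 2) ∨ (N.inDeg v = 1 ∧ N.outDeg v = 0) ∨
    (N.inDeg v = 1 ∧ N.outDeg v = 2) ∨ (N.inDeg v = 2 ∧ N.outDeg v = 1) ∨
    (N.inDeg v = 0 ∧ N.outDeg v = 0))

lemma net_of_isRootedBinaryNet {N : DNet} {X : Finset ℕ} (h : IsRootedBinaryNet N X) :
    Net N := by
  rcases h with ⟨x, -, hv, ha⟩ | ⟨h1, h2, h3, -, h5, -⟩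
  · refine ⟨by simp [ha], by simp [ha], ?_, ?_⟩
    · intro v hcyc
      cases hcyc with
      | single hb => exact absurd hb (by simp [DNet.Arc, ha])
      | tail _ hb => exact absurd hb (by simp [DNet.Arc, ha])
    · intro v _
      right; right; right; right
      simp [DNet.inDeg, DNet.outDeg, ha]
  · refine ⟨h1, h2, h3, ?_⟩
    intro v hv
    rcases h5 v hv with h | h | h | h
    · exact Or.inl ⟨h.2.1, h.2.2⟩
    · exact Or.inr (Or.inl ⟨h.2.1, h.2.2⟩)
    · exact Or.inr (Or.inr (Or.inl ⟨h.2.1, h.2.2⟩))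
    · exact Or.inr (Or.inr (Or.inr (Or.inl ⟨h.2.1, h.2.2⟩)))

/-! ### Protected leaves -/

/-- A leaf is bad if its parent is a reticulation or it has a reticulation sibling. -/
def BadLeaf (N : DNet) (x : ℕ) : Prop :=
  ∃ p, (p, x) ∈ N.arcs ∧ (N.IsRet p ∨ ∃ c, c ≠ x ∧ (p, c) ∈ N.arcs ∧ N.IsRet c)

/-- `j` is the first index (within length `k`) whose pair contains `x`. -/
def FirstOcc (rs : ℕ → Pick) (k x j : ℕ) : Prop :=
  j < k ∧ (rs j).Contains x ∧ ∀ l < j, ¬ (rs l).Contains x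

/-- `S` is a set of protected sinks for the sequence `rs` of length `k`. -/
def Prot (N : DNet) (rs : ℕ → Pick) (k : ℕ) (S : Finset ℕ) : Prop :=
  (∀ x ∈ S, x ∈ N.verts ∧ N.outDeg x = 0) ∧
  (∀ x ∈ S, ∀ j, FirstOcc rs k x j → (rs j).IsCherryPair) ∧
  (∀ x ∈ S, ∀ y ∈ S, x ≠ y → ∀ j, FirstOcc rs k x j → FirstOcc rs k y j → False) ∧
  (∀ x ∈ S, ∀ i j, (rs i).IsRetPair → SuccAt rs k i j → FirstOcc rs k x j → False)

/-! ### Shift lemmas -/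

lemma succAt_shift {rs : ℕ → Pick} {k i j : ℕ}
    (h : SuccAt (fun n => rs (n + 1)) k i j) : SuccAt rs (k + 1) (i + 1) (j + 1) := by
  obtain ⟨hij, hjk, hc, hmin⟩ := h
  refine ⟨by omega, by omega, hc, ?_⟩
  intro l hl1 hl2
  have hl : l = (l - 1) + 1 := by omega
  rw [hl]
  exact hmin (l - 1) (by omega) (by omega)

lemma treeChildSeq_shift {rs : ℕ → Pick} {k : ℕ} (h : TreeChildSeq rs (k + 1)) :
    TreeChildSeq (fun n => rs (n + 1)) k :=
  ⟨fun i j hr hs => h.1 (i + 1) (j + 1) hr (succAt_shift hs),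
   fun i i' j hne hr hr' hs hs' =>
     h.2 (i + 1) (i' + 1) (j + 1) (by omega) hr hr' (succAt_shift hs) (succAt_shift hs')⟩

lemma firstOcc_shift {rs : ℕ → Pick} {k x j : ℕ} (hx : ¬ (rs 0).Contains x)
    (h : FirstOcc (fun n => rs (n + 1)) k x j) : FirstOcc rs (k + 1) x (j + 1) := by
  have hjk := h.1
  refine ⟨by omega, h.2.1, ?_⟩
  intro l hl
  rcases Nat.eq_zero_or_pos l with rfl | hp
  · exact hx
  · have hl' : l = (l - 1) + 1 := by omega
    rw [hl']
    exact h.2.2 (l - 1) (by omega)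

lemma succAt_zero_of_firstOcc {rs : ℕ → Pick} {k x j : ℕ} (hx : (rs 0).fst = x)
    (h : FirstOcc (fun n => rs (n + 1)) k x j) : SuccAt rs (k + 1) 0 (j + 1) := by
  have hjk := h.1
  refine ⟨by omega, by omega, by rw [hx]; exact h.2.1, ?_⟩
  intro l hl1 hl2
  rw [hx]
  have hl' : l = (l - 1) + 1 := by omega
  rw [hl']
  exact h.2.2 (l - 1) (by omega)

end TCProof
namespace TCProof

open Relation

lemma cherry_case {N M : DNet} {a b : ℕ} (hN : Net N) (hred : RReduceCherry N M a b) :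
    Net M ∧
    (M.TreeChild → N.TreeChild) ∧
    (∀ x, N.outDeg x = 0 → x ≠ a → x ≠ b → BadLeaf N x → BadLeaf M x) ∧
    (¬ BadLeaf N a ∧ ¬ BadLeaf N b) ∧
    (∀ x y q, N.outDeg x = 0 → N.outDeg y = 0 → x ≠ a → x ≠ b → y ≠ a → y ≠ b →
      (q, x) ∈ N.arcs → (q, y) ∈ N.arcs → (q, x) ∈ M.arcs ∧ (q, y) ∈ M.arcs) ∧
    (∀ x y q, x ≠ y → (q, x) ∈ N.arcs → (q, y) ∈ N.arcs →
      ((x = a → y = b) ∧ (x = b → y = a))) ∧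
    (∀ x ∈ N.verts, N.outDeg x = 0 → x ≠ a → x ≠ b → x ∈ M.verts ∧ M.outDeg x = 0) := by
  obtain ⟨⟨hab, hla, hlb, -⟩, p, hpa, hpb, hbr⟩ := hred
  obtain ⟨haV, hain, haout⟩ := hla
  obtain ⟨hbV, hbin, hbout⟩ := hlb
  have hpV : p ∈ N.verts := (hN.1 _ hpa).1
  have hp2 : N.outDeg p = 2 := by
    have h2 := two_le_outDeg hpa hpb hab
    rcases hN.2.2.2 p hpV with ⟨h, h'⟩ | ⟨h, h'⟩ | ⟨h, h'⟩ | ⟨h, h'⟩ | ⟨h, h'⟩ <;> omega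
  have hchild : ∀ x, (p, x) ∈ N.arcs → x = a ∨ x = b :=
    fun x hx => out_eq_of_outDeg_two hp2 hpa hpb hab hx
  have hparenta : ∀ q, (q, a) ∈ N.arcs → q = p := fun q hq => in_eq_of_inDeg_one hain hpa hq
  have hparentb : ∀ q, (q, b) ∈ N.arcs → q = p := fun q hq => in_eq_of_inDeg_one hbin hpb hq
  have hpna : p ≠ a := by intro h; rw [h] at hp2; omega
  have hpnb : p ≠ b := by intro h; rw [h] at hp2; omega
  -- shared conclusions
  have hC4 : ¬ BadLeaf N a ∧ ¬ BadLeaf N b := by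
    constructor
    · rintro ⟨q, hqa, hbad⟩
      have hq := hparenta q hqa; subst hq
      rcases hbad with ⟨-, -, h1⟩ | ⟨c, hca, hpc, -, h2, -⟩
      · omega
      · rcases hchild c hpc with rfl | rfl
        · exact hca rfl
        · omega
    · rintro ⟨q, hqb, hbad⟩
      have hq := hparentb q hqb; subst hq
      rcases hbad with ⟨-, -, h1⟩ | ⟨c, hcb, hpc, -, h2, -⟩
      · omega
      · rcases hchild c hpc with rfl | rfl
        · omega
        · exact hcb rfl
  have hC6 : ∀ x y q, x ≠ y → (q, x) ∈ N.arcs → (q, y) ∈ N.arcs →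
      ((x = a → y = b) ∧ (x = b → y = a)) := by
    intro x y q hxy hqx hqy
    constructor
    · rintro rfl
      have hq := hparenta q hqx; subst hq
      rcases hchild y hqy with rfl | rfl
      · exact absurd rfl hxy
      · rfl
    · rintro rfl
      have hq := hparentb q hqx; subst hq
      rcases hchild y hqy with rfl | rfl
      · rfl
      · exact absurd rfl hxy
  rcases hbr with ⟨hp0, hMv, hMa⟩ | ⟨g, hgp, hMv, hMa⟩
  · -- ===== root branch : M.arcs = N.arcs \ {(p,a),(p,b)} =====
    have hMmem : ∀ u v : ℕ, (u, v) ∈ M.arcs ↔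
        (u, v) ∈ N.arcs ∧ (u, v) ≠ (p, a) ∧ (u, v) ≠ (p, b) := by
      intro u v
      rw [hMa]
      simp only [Finset.mem_sdiff, Finset.mem_insert, Finset.mem_singleton]
      tauto
    have hMsub : ∀ {u v : ℕ}, (u, v) ∈ M.arcs → (u, v) ∈ N.arcs :=
      fun h => ((hMmem _ _).1 h).1
    have hmemM : ∀ {u v : ℕ}, (u, v) ∈ N.arcs → u ≠ p → (u, v) ∈ M.arcs := by
      intro u v h hup
      refine (hMmem _ _).2 ⟨h, ?_, ?_⟩ <;> simp [Prod.ext_iff, hup]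
    have hinfib : ∀ v, v ≠ a → v ≠ b →
        M.arcs.filter (fun q => q.2 = v) = N.arcs.filter (fun q => q.2 = v) := by
      intro v hva hvb
      apply Finset.ext
      rintro ⟨u, w⟩
      simp only [Finset.mem_filter, hMa, Finset.mem_sdiff, Finset.mem_insert,
        Finset.mem_singleton, Prod.mk.injEq]
      constructor
      · rintro ⟨⟨h1, -⟩, h2⟩; exact ⟨h1, h2⟩
      · rintro ⟨h1, rfl⟩
        refine ⟨⟨h1, ?_⟩, rfl⟩
        rintro (⟨rfl, rfl⟩ | ⟨rfl, rfl⟩)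
        · exact hva rfl
        · exact hvb rfl
    have houtfib : ∀ u, u ≠ p →
        M.arcs.filter (fun q => q.1 = u) = N.arcs.filter (fun q => q.1 = u) := by
      intro u hup
      apply Finset.ext
      rintro ⟨u', w⟩
      simp only [Finset.mem_filter, hMa, Finset.mem_sdiff, Finset.mem_insert,
        Finset.mem_singleton, Prod.mk.injEq]
      constructor
      · rintro ⟨⟨h1, -⟩, h2⟩; exact ⟨h1, h2⟩
      · rintro ⟨h1, rfl⟩
        refine ⟨⟨h1, ?_⟩, rfl⟩
        rintro (⟨rfl, rfl⟩ | ⟨rfl, rfl⟩) <;> exact hup rfl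
    have hdeg : ∀ v, v ≠ a → v ≠ b → v ≠ p →
        M.inDeg v = N.inDeg v ∧ M.outDeg v = N.outDeg v := by
      intro v h1 h2 h3
      constructor
      · show (M.arcs.filter (fun q => q.2 = v)).card = (N.arcs.filter (fun q => q.2 = v)).card
        rw [hinfib v h1 h2]
      · show (M.arcs.filter (fun q => q.1 = v)).card = (N.arcs.filter (fun q => q.1 = v)).card
        rw [houtfib v h3]
    have hMinb : M.inDeg b = 0 := by
      show (M.arcs.filter (fun q => q.2 = b)).card = 0
      rw [Finset.card_eq_zero]
      apply Finset.eq_empty_of_forall_notMem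
      rintro ⟨u, w⟩ hm
      obtain ⟨hm1, hm2⟩ := Finset.mem_filter.1 hm
      simp only at hm2
      subst hm2
      have := hparentb u (hMsub hm1)
      subst this
      exact ((hMmem _ _).1 hm1).2.2 rfl
    have hMoutb : M.outDeg b = 0 := by
      show (M.arcs.filter (fun q => q.1 = b)).card = 0
      rw [houtfib b (Ne.symm hpnb)]
      exact hbout
    refine ⟨?_, ?_, ?_, hC4, ?_, hC6, ?_⟩
    · -- Net M
      refine ⟨?_, ?_, ?_, ?_⟩
      · rintro ⟨u, v⟩ hm
        obtain ⟨hn, hne1, hne2⟩ := (hMmem u v).1 hm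
        obtain ⟨huV, hvV⟩ := hN.1 _ hn
        have hua : u ≠ a := by
          intro h; subst h
          have := one_le_outDeg hn; omega
        have hup : u ≠ p := by
          intro h; subst h
          rcases hchild v hn with rfl | rfl
          · exact hne1 rfl
          · exact hne2 rfl
        have hva : v ≠ a := by
          intro h; subst h
          exact hne1 (by rw [hparenta u hn])
        have hvp : v ≠ p := by
          intro h; subst h
          have := one_le_inDeg hn; omega
        rw [hMv]
        constructor <;> simp [Finset.mem_sdiff, hua, hup, hva, hvp, huV, hvV]
      · rintro ⟨u, v⟩ hq
        exact hN.2.1 _ (hMsub hq)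
      · intro v hcyc
        exact hN.2.2.1 v (transGen_lift (fun u w h => TransGen.single (hMsub h)) hcyc)
      · intro v hv
        rw [hMv, Finset.mem_sdiff] at hv
        obtain ⟨hvN, hvne⟩ := hv
        simp only [Finset.mem_insert, Finset.mem_singleton, not_or] at hvne
        by_cases hvb : v = b
        · subst hvb
          right; right; right; right
          exact ⟨hMinb, hMoutb⟩
        · obtain ⟨e1, e2⟩ := hdeg v hvne.1 hvb hvne.2
          rw [e1, e2]
          exact hN.2.2.2 v hvN
    · -- TreeChild lift
      intro hTCM v hvV hvout
      by_cases hvp : v = p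
      · subst hvp
        exact ⟨a, hpa, Or.inr ⟨haV, hain, haout⟩⟩
      · have hva : v ≠ a := by intro h; rw [h] at hvout; exact hvout haout
        have hvM : v ∈ M.verts := by
          rw [hMv]; simp [Finset.mem_sdiff, hvV, hva, hvp]
        have houtM : M.outDeg v = N.outDeg v := by
          show (M.arcs.filter (fun q => q.1 = v)).card = (N.arcs.filter (fun q => q.1 = v)).card
          rw [houtfib v hvp]
        obtain ⟨c, hcM, hcs⟩ := hTCM v hvM (by rw [houtM]; exact hvout)
        have hcN := hMsub hcM
        have hcnea : c ≠ a := fun h => hvp (hparenta v (h ▸ hcN))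
        have hcnep : c ≠ p := by
          intro h; subst h
          have := one_le_inDeg hcN; omega
        rcases eq_or_ne c b with rfl | hcb
        · exfalso
          rcases hcs with ⟨-, h1, -⟩ | ⟨-, h1, -⟩ <;> omega
        · obtain ⟨e1, e2⟩ := hdeg c hcnea hcb hcnep
          have hcV : c ∈ N.verts := (hN.1 _ hcN).2
          refine ⟨c, hcN, ?_⟩
          rcases hcs with ⟨-, h1, h2⟩ | ⟨-, h1, h2⟩
          · exact Or.inl ⟨hcV, by omega, by omega⟩
          · exact Or.inr ⟨hcV, by omega, by omega⟩
    · -- BadLeaf forwarding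
      rintro x hxout hxa hxb ⟨q, hqx, hbad⟩
      have hqp : q ≠ p := by
        intro h; subst h
        rcases hchild x hqx with rfl | rfl
        · exact hxa rfl
        · exact hxb rfl
      have hqa : q ≠ a := by
        intro h; subst h
        have := one_le_outDeg hqx; omega
      have hqb : q ≠ b := by
        intro h; subst h
        have := one_le_outDeg hqx; omega
      have hqxM : (q, x) ∈ M.arcs := hmemM hqx hqp
      rcases hbad with ⟨hqV, hq2, hq1⟩ | ⟨c, hcx, hqc, hcV, hc2, hc1⟩
      · obtain ⟨e1, e2⟩ := hdeg q hqa hqb hqp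
        refine ⟨q, hqxM, Or.inl ⟨?_, by omega, by omega⟩⟩
        rw [hMv]; simp [Finset.mem_sdiff, hqV, hqa, hqp]
      · have hcnea : c ≠ a := by
          intro h; subst h
          exact hqp (hparenta q hqc)
        have hcneb : c ≠ b := by intro h; rw [h] at hc2; omega
        have hcnep : c ≠ p := by intro h; rw [h] at hc1; omega
        obtain ⟨e1, e2⟩ := hdeg c hcnea hcneb hcnep
        refine ⟨q, hqxM, Or.inr ⟨c, hcx, hmemM hqc hqp, ?_, by omega, by omega⟩⟩
        rw [hMv]; simp [Finset.mem_sdiff, hcV, hcnea, hcnep]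
    · -- sibling transfer
      intro x y q hxo hyo hxa hxb hya hyb hqx hqy
      have hqp : q ≠ p := by
        intro h; subst h
        rcases hchild x hqx with rfl | rfl
        · exact hxa rfl
        · exact hxb rfl
      exact ⟨hmemM hqx hqp, hmemM hqy hqp⟩
    · -- sink transfer
      intro x hxV hxo hxa hxb
      have hxp : x ≠ p := by intro h; rw [h] at hxo; omega
      constructor
      · rw [hMv]; simp [Finset.mem_sdiff, hxV, hxa, hxp]
      · show (M.arcs.filter (fun q => q.1 = x)).card = 0
        rw [houtfib x hxp]
        exact hxo
  · -- ===== general branch =====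
    have hgnp : g ≠ p := hN.2.1 _ hgp
    have hgna : g ≠ a := by
      intro h; subst h
      have := one_le_outDeg hgp; omega
    have hgnb : g ≠ b := by
      intro h; subst h
      have := one_le_outDeg hgp; omega
    have hpin : N.inDeg p = 1 := by
      have h1 := one_le_inDeg hgp
      rcases hN.2.2.2 p hpV with ⟨h, h'⟩ | ⟨h, h'⟩ | ⟨h, h'⟩ | ⟨h, h'⟩ | ⟨h, h'⟩ <;> omega
    have hparentp : ∀ q, (q, p) ∈ N.arcs → q = g := fun q hq => in_eq_of_inDeg_one hpin hgp hq
    have hgbN : (g, b) ∉ N.arcs := fun h => hgnp (hparentb g h)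
    have hMmem : ∀ u v : ℕ, (u, v) ∈ M.arcs ↔
        (u, v) = (g, b) ∨ ((u, v) ∈ N.arcs ∧ (u, v) ≠ (g, p) ∧ (u, v) ≠ (p, a) ∧
          (u, v) ≠ (p, b)) := by
      intro u v
      rw [hMa]
      simp only [Finset.mem_insert, Finset.mem_sdiff, Finset.mem_singleton]
      tauto
    have hmemM : ∀ {u v : ℕ}, (u, v) ∈ N.arcs → u ≠ p → v ≠ p → (u, v) ∈ M.arcs := by
      intro u v h hup hvp
      refine (hMmem _ _).2 (Or.inr ⟨h, ?_, ?_, ?_⟩) <;> simp [Prod.ext_iff, hup, hvp]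
    have hgbM : (g, b) ∈ M.arcs := (hMmem g b).2 (Or.inl rfl)
    have hinfib : ∀ v, v ≠ a → v ≠ b → v ≠ p →
        M.arcs.filter (fun q => q.2 = v) = N.arcs.filter (fun q => q.2 = v) := by
      intro v hva hvb hvp
      apply Finset.ext
      rintro ⟨s, t⟩
      simp only [Finset.mem_filter, hMa, Finset.mem_insert, Finset.mem_sdiff,
        Finset.mem_singleton, Prod.mk.injEq]
      constructor
      · rintro ⟨⟨-, he2⟩ | ⟨h1, -⟩, h2⟩
        · exact absurd (he2.symm.trans h2) (Ne.symm hvb)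
        · exact ⟨h1, h2⟩
      · rintro ⟨h1, h2⟩
        refine ⟨Or.inr ⟨h1, ?_⟩, h2⟩
        rintro (⟨-, he2⟩ | ⟨-, he2⟩ | ⟨-, he2⟩)
        · exact hvp (h2.symm.trans he2)
        · exact hva (h2.symm.trans he2)
        · exact hvb (h2.symm.trans he2)
    have houtfib : ∀ u, u ≠ g → u ≠ p →
        M.arcs.filter (fun q => q.1 = u) = N.arcs.filter (fun q => q.1 = u) := by
      intro u hug hup
      apply Finset.ext
      rintro ⟨s, t⟩
      simp only [Finset.mem_filter, hMa, Finset.mem_insert, Finset.mem_sdiff,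
        Finset.mem_singleton, Prod.mk.injEq]
      constructor
      · rintro ⟨⟨he1, -⟩ | ⟨h1, -⟩, h2⟩
        · exact absurd (he1.symm.trans h2) (Ne.symm hug)
        · exact ⟨h1, h2⟩
      · rintro ⟨h1, h2⟩
        refine ⟨Or.inr ⟨h1, ?_⟩, h2⟩
        rintro (⟨he1, -⟩ | ⟨he1, -⟩ | ⟨he1, -⟩)
        · exact hug (h2.symm.trans he1)
        · exact hup (h2.symm.trans he1)
        · exact hup (h2.symm.trans he1)
    have hinbset : M.arcs.filter (fun q => q.2 = b) = {(g, b)} := by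
      apply Finset.ext
      rintro ⟨s, t⟩
      simp only [Finset.mem_filter, Finset.mem_singleton, Prod.mk.injEq]
      constructor
      · rintro ⟨hm, h2⟩
        rcases (hMmem s t).1 hm with h | ⟨h1, -, -, h4⟩
        · injection h with he1 he2
          exact ⟨he1, h2⟩
        · exfalso
          apply h4
          have hsp : s = p := hparentb s (h2 ▸ h1)
          rw [hsp, h2]
      · rintro ⟨rfl, rfl⟩
        exact ⟨hgbM, rfl⟩
    have hMinb : M.inDeg b = 1 := by
      show (M.arcs.filter (fun q => q.2 = b)).card = 1
      rw [hinbset]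
      rfl
    have houtg : M.outDeg g = N.outDeg g := by
      have hset : M.arcs.filter (fun q => q.1 = g) =
          insert (g, b) ((N.arcs.filter (fun q => q.1 = g)).erase (g, p)) := by
        apply Finset.ext
        rintro ⟨s, t⟩
        simp only [Finset.mem_filter, Finset.mem_insert, Finset.mem_erase, Prod.mk.injEq]
        constructor
        · rintro ⟨hm, h2⟩
          rcases (hMmem s t).1 hm with h | ⟨h1, h2', -, -⟩
          · injection h with he1 he2
            exact Or.inl ⟨he1, he2⟩
          · exact Or.inr ⟨h2', ⟨h1, h2⟩⟩
        · rintro (⟨rfl, rfl⟩ | ⟨hne, ⟨h1, h2⟩⟩)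
          · exact ⟨hgbM, rfl⟩
          · refine ⟨(hMmem s t).2 (Or.inr ⟨h1, hne, ?_, ?_⟩), h2⟩
            · intro h
              injection h with he1 he2
              exact hgnp (h2.symm.trans he1)
            · intro h
              injection h with he1 he2
              exact hgnp (h2.symm.trans he1)
      show (M.arcs.filter (fun q => q.1 = g)).card = (N.arcs.filter (fun q => q.1 = g)).card
      rw [hset]
      have hgpmem : (g, p) ∈ N.arcs.filter (fun q => q.1 = g) := Finset.mem_filter.2 ⟨hgp, rfl⟩
      have hgbnot : (g, b) ∉ (N.arcs.filter (fun q => q.1 = g)).erase (g, p) := by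
        intro h
        exact hgbN (Finset.mem_filter.1 (Finset.mem_of_mem_erase h)).1
      rw [Finset.card_insert_of_notMem hgbnot, Finset.card_erase_of_mem hgpmem]
      have h1 : 1 ≤ (N.arcs.filter (fun q => q.1 = g)).card := Finset.card_pos.2 ⟨_, hgpmem⟩
      omega
    have hdeg : ∀ v, v ≠ a → v ≠ p →
        M.inDeg v = N.inDeg v ∧ M.outDeg v = N.outDeg v := by
      intro v h1 h3
      constructor
      · by_cases h2 : v = b
        · subst h2
          rw [hMinb, hbin]
        · show (M.arcs.filter (fun q => q.2 = v)).card = (N.arcs.filter (fun q => q.2 = v)).card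
          rw [hinfib v h1 h2 h3]
      · by_cases hg : v = g
        · subst hg; exact houtg
        · show (M.arcs.filter (fun q => q.1 = v)).card = (N.arcs.filter (fun q => q.1 = v)).card
          rw [houtfib v hg h3]
    refine ⟨?_, ?_, ?_, hC4, ?_, hC6, ?_⟩
    · -- Net M
      refine ⟨?_, ?_, ?_, ?_⟩
      · rintro ⟨u, v⟩ hm
        rcases (hMmem u v).1 hm with h | ⟨hn, hne1, hne2, hne3⟩
        · injection h with he1 he2
          subst he1; subst he2
          rw [hMv]
          constructor <;>
            simp [Finset.mem_sdiff, (hN.1 _ hgp).1, hbV, hgna, hgnp, Ne.symm hab, Ne.symm hpnb]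
        · obtain ⟨huV, hvV⟩ := hN.1 _ hn
          have hua : u ≠ a := by
            intro h; subst h
            have := one_le_outDeg hn; omega
          have hup : u ≠ p := by
            intro h; subst h
            rcases hchild v hn with rfl | rfl
            · exact hne2 rfl
            · exact hne3 rfl
          have hva : v ≠ a := by
            intro h; subst h
            exact hne2 (by rw [hparenta u hn])
          have hvp : v ≠ p := by
            intro h; subst h
            exact hne1 (by rw [hparentp u hn])
          rw [hMv]
          constructor <;> simp [Finset.mem_sdiff, hua, hup, hva, hvp, huV, hvV]
      · rintro ⟨u, v⟩ hq
        rcases (hMmem u v).1 hq with h | ⟨hn, -, -, -⟩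
        · injection h with he1 he2
          subst he1; subst he2
          exact hgnb
        · exact hN.2.1 _ hn
      · intro v hcyc
        refine hN.2.2.1 v (transGen_lift ?_ hcyc)
        intro s t h
        rcases (hMmem s t).1 h with heq | ⟨hn, -, -, -⟩
        · injection heq with he1 he2
          subst he1; subst he2
          exact TransGen.tail (TransGen.single hgp) hpb
        · exact TransGen.single hn
      · intro v hv
        rw [hMv, Finset.mem_sdiff] at hv
        obtain ⟨hvN, hvne⟩ := hv
        simp only [Finset.mem_insert, Finset.mem_singleton, not_or] at hvne
        obtain ⟨e1, e2⟩ := hdeg v hvne.1 hvne.2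
        rw [e1, e2]
        exact hN.2.2.2 v hvN
    · -- TreeChild lift
      intro hTCM v hvV hvout
      by_cases hvp : v = p
      · subst hvp
        exact ⟨a, hpa, Or.inr ⟨haV, hain, haout⟩⟩
      by_cases hvg : v = g
      · subst hvg
        exact ⟨p, hgp, Or.inl ⟨hpV, hpin, hp2⟩⟩
      · have hva : v ≠ a := by intro h; rw [h] at hvout; exact hvout haout
        have hvM : v ∈ M.verts := by
          rw [hMv]; simp [Finset.mem_sdiff, hvV, hva, hvp]
        have houtM : M.outDeg v = N.outDeg v := (hdeg v hva hvp).2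
        obtain ⟨c, hcM, hcs⟩ := hTCM v hvM (by rw [houtM]; exact hvout)
        rcases (hMmem v c).1 hcM with heq | ⟨hcN, -, -, -⟩
        · exfalso
          injection heq with he1 he2
          exact hvg he1
        · have hcnea : c ≠ a := fun h => hvp (hparenta v (h ▸ hcN))
          have hcnep : c ≠ p := fun h => hvg (hparentp v (h ▸ hcN))
          obtain ⟨e1, e2⟩ := hdeg c hcnea hcnep
          have hcV : c ∈ N.verts := (hN.1 _ hcN).2
          refine ⟨c, hcN, ?_⟩
          rcases hcs with ⟨-, h1, h2⟩ | ⟨-, h1, h2⟩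
          · exact Or.inl ⟨hcV, by omega, by omega⟩
          · exact Or.inr ⟨hcV, by omega, by omega⟩
    · -- BadLeaf forwarding
      rintro x hxout hxa hxb ⟨q, hqx, hbad⟩
      have hxp : x ≠ p := by intro h; rw [h] at hxout; omega
      have hqp : q ≠ p := by
        intro h; subst h
        rcases hchild x hqx with rfl | rfl
        · exact hxa rfl
        · exact hxb rfl
      have hqa : q ≠ a := by
        intro h; subst h
        have := one_le_outDeg hqx; omega
      have hqxM : (q, x) ∈ M.arcs := hmemM hqx hqp hxp
      rcases hbad with ⟨hqV, hq2, hq1⟩ | ⟨c, hcx, hqc, hcV, hc2, hc1⟩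
      · obtain ⟨e1, e2⟩ := hdeg q hqa hqp
        refine ⟨q, hqxM, Or.inl ⟨?_, by omega, by omega⟩⟩
        rw [hMv]; simp [Finset.mem_sdiff, hqV, hqa, hqp]
      · have hcnea : c ≠ a := by
          intro h; subst h
          exact hqp (hparenta q hqc)
        have hcnep : c ≠ p := by intro h; rw [h] at hc1; omega
        obtain ⟨e1, e2⟩ := hdeg c hcnea hcnep
        refine ⟨q, hqxM, Or.inr ⟨c, hcx, hmemM hqc hqp hcnep, ?_, by omega, by omega⟩⟩
        rw [hMv]; simp [Finset.mem_sdiff, hcV, hcnea, hcnep]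
    · -- sibling transfer
      intro x y q hxo hyo hxa hxb hya hyb hqx hqy
      have hxp : x ≠ p := by intro h; rw [h] at hxo; omega
      have hyp : y ≠ p := by intro h; rw [h] at hyo; omega
      have hqp : q ≠ p := by
        intro h; subst h
        rcases hchild x hqx with rfl | rfl
        · exact hxa rfl
        · exact hxb rfl
      exact ⟨hmemM hqx hqp hxp, hmemM hqy hqp hyp⟩
    · -- sink transfer
      intro x hxV hxo hxa hxb
      have hxp : x ≠ p := by intro h; rw [h] at hxo; omega
      have hxg : x ≠ g := by
        intro h; subst h
        have := one_le_outDeg hgp; omega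
      constructor
      · rw [hMv]; simp [Finset.mem_sdiff, hxV, hxa, hxp]
      · show (M.arcs.filter (fun q => q.1 = x)).card = 0
        rw [houtfib x hxg hxp]
        exact hxo

end TCProof
namespace TCProof

open Relation

lemma swap_inj {a b pa pb t1 t2 : ℕ} (hab : a ≠ b) (h1a : t1 ≠ a) (h1b : t1 ≠ b)
    (h2a : t2 ≠ a) (h2b : t2 ≠ b)
    (he : (if t1 = pa then a else if t1 = pb then b else t1)
        = (if t2 = pa then a else if t2 = pb then b else t2)) : t1 = t2 := by
  split_ifs at he <;> simp_all

lemma ret_case {N M : DNet} {a b : ℕ} (hN : Net N) (hred : RReduceRetCherry N M a b) :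
    Net M ∧
    (a ∈ M.verts ∧ M.outDeg a = 0) ∧
    (∀ x ∈ N.verts, N.outDeg x = 0 → x ∈ M.verts ∧ M.outDeg x = 0) ∧
    (M.TreeChild → ¬ BadLeaf M a → N.TreeChild) ∧
    (∀ x, N.outDeg x = 0 → x ≠ a → x ≠ b → BadLeaf N x →
      (BadLeaf M x ∨ ∃ q, (q, x) ∈ M.arcs ∧ (q, a) ∈ M.arcs)) ∧
    (∀ x y q, N.outDeg x = 0 → N.outDeg y = 0 → x ≠ a → x ≠ b →
      y ≠ a → y ≠ b → (q, x) ∈ N.arcs → (q, y) ∈ N.arcs →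
      (q, x) ∈ M.arcs ∧ (q, y) ∈ M.arcs) := by
  obtain ⟨⟨hab, hla, hlb, -⟩, pa, pb, qa, qb, hpaa, hpbb, hret, hpbpa, hqapa, hqanepb,
    hqbpb, hMv, hMa⟩ := hred
  obtain ⟨haV, hain, haout⟩ := hla
  obtain ⟨hbV, hbin, hbout⟩ := hlb
  obtain ⟨hpaV, hpain, hpaout⟩ := hret
  have hpbV : pb ∈ N.verts := (hN.1 _ hpbb).1
  have hqaV : qa ∈ N.verts := (hN.1 _ hqapa).1
  have hqbV : qb ∈ N.verts := (hN.1 _ hqbpb).1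
  have hchildpa : ∀ x, (pa, x) ∈ N.arcs → x = a := fun x hx => out_eq_of_outDeg_one hpaout hpaa hx
  have hparenta : ∀ q, (q, a) ∈ N.arcs → q = pa := fun q hq => in_eq_of_inDeg_one hain hpaa hq
  have hparentb : ∀ q, (q, b) ∈ N.arcs → q = pb := fun q hq => in_eq_of_inDeg_one hbin hpbb hq
  have hpbnpa : pb ≠ pa := hN.2.1 _ hpbpa
  have hqanpa : qa ≠ pa := hN.2.1 _ hqapa
  have hqbnpb : qb ≠ pb := hN.2.1 _ hqbpb
  have hpana : pa ≠ a := hN.2.1 _ hpaa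
  have hpbnb : pb ≠ b := hN.2.1 _ hpbb
  have hpanb : pa ≠ b := by intro h; rw [h] at hpaout; omega
  have hpbna : pb ≠ a := by
    intro h; subst h
    have := one_le_outDeg hpbpa; omega
  have hpb21 : N.inDeg pb = 1 ∧ N.outDeg pb = 2 := by
    have h2 := two_le_outDeg hpbpa hpbb hpanb
    have h1 := one_le_inDeg hqbpb
    rcases hN.2.2.2 pb hpbV with ⟨h, h'⟩ | ⟨h, h'⟩ | ⟨h, h'⟩ | ⟨h, h'⟩ | ⟨h, h'⟩ <;> omega
  obtain ⟨hpbin, hpbout⟩ := hpb21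
  have hchildpb : ∀ x, (pb, x) ∈ N.arcs → x = pa ∨ x = b :=
    fun x hx => out_eq_of_outDeg_two hpbout hpbpa hpbb hpanb hx
  have hparentpa : ∀ u, (u, pa) ∈ N.arcs → u = qa ∨ u = pb :=
    fun u hu => in_eq_of_inDeg_two hpain hqapa hpbpa hqanepb hu
  have hparentpb : ∀ u, (u, pb) ∈ N.arcs → u = qb := fun u hu => in_eq_of_inDeg_one hpbin hqbpb hu
  have hqbnpa : qb ≠ pa := by
    intro h; subst h
    exact hpbna (hchildpa pb hqbpb)
  have hqana : qa ≠ a := by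
    intro h; subst h
    have := one_le_outDeg hqapa; omega
  have hqanb : qa ≠ b := by
    intro h; subst h
    have := one_le_outDeg hqapa; omega
  have hqbna : qb ≠ a := by
    intro h; subst h
    have := one_le_outDeg hqbpb; omega
  have hqbnb : qb ≠ b := by
    intro h; subst h
    have := one_le_outDeg hqbpb; omega
  have hqaaN : (qa, a) ∉ N.arcs := fun h => hqanpa (hparenta qa h)
  have hqbbN : (qb, b) ∉ N.arcs := fun h => hqbnpb (hparentb qb h)
  have hanpa : a ≠ pa := Ne.symm hpana
  have hanpb : a ≠ pb := Ne.symm hpbna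
  have hbnpa : b ≠ pa := Ne.symm hpanb
  have hbnpb : b ≠ pb := Ne.symm hpbnb
  -- membership characterisation
  have hMmem : ∀ u v : ℕ, (u, v) ∈ M.arcs ↔
      (u, v) = (qa, a) ∨ (u, v) = (qb, b) ∨ ((u, v) ∈ N.arcs ∧ (u, v) ≠ (pb, pa) ∧
        (u, v) ≠ (pa, a) ∧ (u, v) ≠ (qa, pa) ∧ (u, v) ≠ (pb, b) ∧ (u, v) ≠ (qb, pb)) := by
    intro u v
    rw [hMa]
    simp only [Finset.mem_insert, Finset.mem_sdiff, Finset.mem_singleton]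
    tauto
  have hqaaM : (qa, a) ∈ M.arcs := (hMmem qa a).2 (Or.inl rfl)
  have hqbbM : (qb, b) ∈ M.arcs := (hMmem qb b).2 (Or.inr (Or.inl rfl))
  have hkeep : ∀ {u v : ℕ}, (u, v) ∈ N.arcs → u ≠ pa → u ≠ pb → v ≠ pa → v ≠ pb →
      (u, v) ∈ M.arcs := by
    intro u v h h1 h2 h3 h4
    refine (hMmem u v).2 (Or.inr (Or.inr ⟨h, ?_, ?_, ?_, ?_, ?_⟩)) <;>
      simp [Prod.ext_iff, h1, h2, h3, h4]
  -- in-fibers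
  have hinfib : ∀ v, v ≠ pa → v ≠ pb → v ≠ a → v ≠ b →
      M.arcs.filter (fun q => q.2 = v) = N.arcs.filter (fun q => q.2 = v) := by
    intro v h1 h2 h3 h4
    apply Finset.ext
    rintro ⟨s, t⟩
    simp only [Finset.mem_filter]
    constructor
    · rintro ⟨hm, ht⟩
      rcases (hMmem s t).1 hm with heq | heq | ⟨hn, -⟩
      · injection heq with he1 he2
        exact absurd (he2.symm.trans ht) (Ne.symm h3)
      · injection heq with he1 he2
        exact absurd (he2.symm.trans ht) (Ne.symm h4)
      · exact ⟨hn, ht⟩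
    · rintro ⟨hn, ht⟩
      refine ⟨?_, ht⟩
      refine hkeep hn ?_ ?_ (fun h => h1 (ht.symm.trans h)) (fun h => h2 (ht.symm.trans h))
      · intro h
        exact h3 (ht.symm.trans (hchildpa t (h ▸ hn)))
      · intro h
        rcases hchildpb t (h ▸ hn) with h' | h'
        · exact h1 (ht.symm.trans h')
        · exact h4 (ht.symm.trans h')
  have hinaset : M.arcs.filter (fun q => q.2 = a) = {(qa, a)} := by
    apply Finset.ext
    rintro ⟨s, t⟩
    simp only [Finset.mem_filter, Finset.mem_singleton, Prod.mk.injEq]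
    constructor
    · rintro ⟨hm, ht⟩
      rcases (hMmem s t).1 hm with heq | heq | ⟨hn, -, hne2, -⟩
      · injection heq with he1 he2
        exact ⟨he1, ht⟩
      · injection heq with he1 he2
        exact absurd (he2.symm.trans ht) hab.symm
      · exfalso
        apply hne2
        have := hparenta s (ht ▸ hn)
        rw [this, ht]
    · rintro ⟨rfl, rfl⟩
      exact ⟨hqaaM, rfl⟩
  have hinbset : M.arcs.filter (fun q => q.2 = b) = {(qb, b)} := by
    apply Finset.ext
    rintro ⟨s, t⟩
    simp only [Finset.mem_filter, Finset.mem_singleton, Prod.mk.injEq]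
    constructor
    · rintro ⟨hm, ht⟩
      rcases (hMmem s t).1 hm with heq | heq | ⟨hn, -, -, -, hne4, -⟩
      · injection heq with he1 he2
        exact absurd (he2.symm.trans ht) hab
      · injection heq with he1 he2
        exact ⟨he1, ht⟩
      · exfalso
        apply hne4
        have := hparentb s (ht ▸ hn)
        rw [this, ht]
    · rintro ⟨rfl, rfl⟩
      exact ⟨hqbbM, rfl⟩
  -- out-fibers
  have houtfib : ∀ u, u ≠ pa → u ≠ pb → u ≠ qa → u ≠ qb →
      M.arcs.filter (fun q => q.1 = u) = N.arcs.filter (fun q => q.1 = u) := by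
    intro u h1 h2 h3 h4
    apply Finset.ext
    rintro ⟨s, t⟩
    simp only [Finset.mem_filter]
    constructor
    · rintro ⟨hm, hs⟩
      rcases (hMmem s t).1 hm with heq | heq | ⟨hn, -⟩
      · injection heq with he1 he2
        exact absurd (he1.symm.trans hs) (Ne.symm h3)
      · injection heq with he1 he2
        exact absurd (he1.symm.trans hs) (Ne.symm h4)
      · exact ⟨hn, hs⟩
    · rintro ⟨hn, hs⟩
      refine ⟨?_, hs⟩
      refine hkeep hn (fun h => h1 (hs.symm.trans h)) (fun h => h2 (hs.symm.trans h)) ?_ ?_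
      · intro h
        rcases hparentpa s (h ▸ hn) with h' | h'
        · exact h3 (hs.symm.trans h')
        · exact h2 (hs.symm.trans h')
      · intro h
        exact h4 (hs.symm.trans (hparentpb s (h ▸ hn)))
  have houtsink : ∀ u, N.outDeg u = 0 → M.outDeg u = 0 := by
    intro u hu
    show (M.arcs.filter (fun q => q.1 = u)).card = 0
    rw [Finset.card_eq_zero]
    apply Finset.eq_empty_of_forall_notMem
    rintro ⟨s, t⟩ hm
    obtain ⟨hm1, hs⟩ := Finset.mem_filter.1 hm
    simp only at hs
    subst hs
    rcases (hMmem s t).1 hm1 with heq | heq | ⟨hn, -⟩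
    · injection heq with he1 he2
      subst he1
      have := one_le_outDeg hqapa; omega
    · injection heq with he1 he2
      subst he1
      have := one_le_outDeg hqbpb; omega
    · have := one_le_outDeg hn; omega
  -- the swap function for out-degrees at qa and qb
  have houtqa : M.outDeg qa = N.outDeg qa := by
    classical
    have hdom : ∀ w, (qa, w) ∈ N.arcs → w ≠ a ∧ w ≠ b := by
      intro w hw
      constructor
      · intro h; exact hqaaN (h ▸ hw)
      · intro h; exact hqanepb (hparentb qa (h ▸ hw))
    have hset : M.arcs.filter (fun q => q.1 = qa) =
        (N.arcs.filter (fun q => q.1 = qa)).image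
          (fun q => (q.1, if q.2 = pa then a else if q.2 = pb then b else q.2)) := by
      apply Finset.ext
      rintro ⟨s, t⟩
      simp only [Finset.mem_filter, Finset.mem_image, Prod.mk.injEq]
      constructor
      · rintro ⟨hm, hs⟩
        rcases (hMmem s t).1 hm with heq | heq | ⟨hn, -, -, hne3, -, hne5⟩
        · injection heq with he1 he2
          exact ⟨(qa, pa), ⟨hqapa, rfl⟩, by simp [hs, he2.symm]⟩
        · injection heq with he1 he2
          have hqq : qb = qa := he1.symm.trans hs
          refine ⟨(qa, pb), ⟨hqq ▸ hqbpb, rfl⟩, ?_⟩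
          simp [hpbnpa, hs, he2.symm]
        · have ht1 : t ≠ pa := by
            intro h
            rcases hparentpa s (h ▸ hn) with h' | h'
            · exact hne3 (by rw [h', h])
            · exact hqanepb (hs.symm.trans h')
          have ht2 : t ≠ pb := by
            intro h
            exact hne5 (by rw [hparentpb s (h ▸ hn), h])
          exact ⟨(s, t), ⟨hn, hs⟩, by simp [ht1, ht2]⟩
      · rintro ⟨⟨s', t'⟩, ⟨hn', hs'⟩, heq⟩
        simp only at hs' heq
        obtain ⟨he1, he2⟩ := heq
        have hsq : s = qa := he1.symm.trans hs'
        have hn'' : (qa, t') ∈ N.arcs := hs' ▸ hn'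
        by_cases h1 : t' = pa
        · have hfa : (if t' = pa then a else if t' = pb then b else t') = a := by
            rw [if_pos h1]
          rw [hfa] at he2
          rw [hsq, ← he2]
          exact ⟨hqaaM, rfl⟩
        by_cases h2 : t' = pb
        · have hqq : qa = qb := hparentpb qa (h2 ▸ hn'')
          have hfb : (if t' = pa then a else if t' = pb then b else t') = b := by
            rw [if_neg h1, if_pos h2]
          rw [hfb] at he2
          rw [hsq, ← he2, hqq]
          exact ⟨hqbbM, rfl⟩
        · have hft : (if t' = pa then a else if t' = pb then b else t') = t' := by
            rw [if_neg h1, if_neg h2]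
          rw [hft] at he2
          rw [hsq, ← he2]
          exact ⟨hkeep hn'' hqanpa hqanepb h1 h2, rfl⟩
    show (M.arcs.filter (fun q => q.1 = qa)).card = (N.arcs.filter (fun q => q.1 = qa)).card
    rw [hset]
    apply Finset.card_image_of_injOn
    rintro ⟨s1, t1⟩ hm1 ⟨s2, t2⟩ hm2 he
    obtain ⟨hn1, hs1⟩ := Finset.mem_filter.1 hm1
    obtain ⟨hn2, hs2⟩ := Finset.mem_filter.1 hm2
    simp only at hs1 hs2
    simp only [Prod.mk.injEq] at he
    obtain ⟨he1, he2⟩ := he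
    obtain ⟨hd1a, hd1b⟩ := hdom t1 (hs1 ▸ hn1)
    obtain ⟨hd2a, hd2b⟩ := hdom t2 (hs2 ▸ hn2)
    have ht12 : t1 = t2 := swap_inj hab hd1a hd1b hd2a hd2b he2
    rw [he1, ht12]
  have houtqb : M.outDeg qb = N.outDeg qb := by
    classical
    have hdom : ∀ w, (qb, w) ∈ N.arcs → w ≠ a ∧ w ≠ b := by
      intro w hw
      constructor
      · intro h; exact hqbnpa (hparenta qb (h ▸ hw))
      · intro h; exact hqbnpb (hparentb qb (h ▸ hw))
    have hset : M.arcs.filter (fun q => q.1 = qb) =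
        (N.arcs.filter (fun q => q.1 = qb)).image
          (fun q => (q.1, if q.2 = pa then a else if q.2 = pb then b else q.2)) := by
      apply Finset.ext
      rintro ⟨s, t⟩
      simp only [Finset.mem_filter, Finset.mem_image, Prod.mk.injEq]
      constructor
      · rintro ⟨hm, hs⟩
        rcases (hMmem s t).1 hm with heq | heq | ⟨hn, hne1, -, hne3, -, hne5⟩
        · injection heq with he1 he2
          have hqq : qa = qb := he1.symm.trans hs
          refine ⟨(qb, pa), ⟨hqq ▸ hqapa, rfl⟩, ?_⟩
          simp [hs, he2.symm]
        · injection heq with he1 he2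
          exact ⟨(qb, pb), ⟨hqbpb, rfl⟩, by simp [hpbnpa, hs, he2.symm]⟩
        · have ht1 : t ≠ pa := by
            intro h
            rcases hparentpa s (h ▸ hn) with h' | h'
            · exact hne3 (by rw [h', h])
            · exact hne1 (by rw [h', h])
          have ht2 : t ≠ pb := by
            intro h
            exact hne5 (by rw [hparentpb s (h ▸ hn), h])
          exact ⟨(s, t), ⟨hn, hs⟩, by simp [ht1, ht2]⟩
      · rintro ⟨⟨s', t'⟩, ⟨hn', hs'⟩, heq⟩
        simp only at hs' heq
        obtain ⟨he1, he2⟩ := heq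
        have hsq : s = qb := he1.symm.trans hs'
        have hn'' : (qb, t') ∈ N.arcs := hs' ▸ hn'
        by_cases h1 : t' = pa
        · have hqq : qb = qa := by
            rcases hparentpa qb (h1 ▸ hn'') with h | h
            · exact h
            · exact absurd h hqbnpb
          have hfa : (if t' = pa then a else if t' = pb then b else t') = a := by
            rw [if_pos h1]
          rw [hfa] at he2
          rw [hsq, ← he2, hqq]
          exact ⟨hqaaM, rfl⟩
        by_cases h2 : t' = pb
        · have hfb : (if t' = pa then a else if t' = pb then b else t') = b := by
            rw [if_neg h1, if_pos h2]
          rw [hfb] at he2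
          rw [hsq, ← he2]
          exact ⟨hqbbM, rfl⟩
        · have hft : (if t' = pa then a else if t' = pb then b else t') = t' := by
            rw [if_neg h1, if_neg h2]
          rw [hft] at he2
          rw [hsq, ← he2]
          exact ⟨hkeep hn'' hqbnpa hqbnpb h1 h2, rfl⟩
    show (M.arcs.filter (fun q => q.1 = qb)).card = (N.arcs.filter (fun q => q.1 = qb)).card
    rw [hset]
    apply Finset.card_image_of_injOn
    rintro ⟨s1, t1⟩ hm1 ⟨s2, t2⟩ hm2 he
    obtain ⟨hn1, hs1⟩ := Finset.mem_filter.1 hm1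
    obtain ⟨hn2, hs2⟩ := Finset.mem_filter.1 hm2
    simp only at hs1 hs2
    simp only [Prod.mk.injEq] at he
    obtain ⟨he1, he2⟩ := he
    obtain ⟨hd1a, hd1b⟩ := hdom t1 (hs1 ▸ hn1)
    obtain ⟨hd2a, hd2b⟩ := hdom t2 (hs2 ▸ hn2)
    have ht12 : t1 = t2 := swap_inj hab hd1a hd1b hd2a hd2b he2
    rw [he1, ht12]
  -- degrees preserved off pa, pb
  have hdeg : ∀ v, v ≠ pa → v ≠ pb → M.inDeg v = N.inDeg v ∧ M.outDeg v = N.outDeg v := by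
    intro v h1 h2
    constructor
    · by_cases h3 : v = a
      · rw [h3]
        show (M.arcs.filter (fun q => q.2 = a)).card = N.inDeg a
        rw [hinaset, hain]; rfl
      by_cases h4 : v = b
      · rw [h4]
        show (M.arcs.filter (fun q => q.2 = b)).card = N.inDeg b
        rw [hinbset, hbin]; rfl
      · show (M.arcs.filter (fun q => q.2 = v)).card = (N.arcs.filter (fun q => q.2 = v)).card
        rw [hinfib v h1 h2 h3 h4]
    · by_cases h3 : v = qa
      · rw [h3]; exact houtqa
      by_cases h4 : v = qb
      · rw [h4]; exact houtqb
      · show (M.arcs.filter (fun q => q.1 = v)).card = (N.arcs.filter (fun q => q.1 = v)).card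
        rw [houtfib v h1 h2 h3 h4]
  have hMverts : ∀ {v : ℕ}, v ∈ N.verts → v ≠ pa → v ≠ pb → v ∈ M.verts := by
    intro v hv h1 h2
    rw [hMv]
    simp [Finset.mem_sdiff, hv, h1, h2]
  refine ⟨?_, ?_, ?_, ?_, ?_, ?_⟩
  · -- Net M
    refine ⟨?_, ?_, ?_, ?_⟩
    · rintro ⟨u, v⟩ hm
      rcases (hMmem u v).1 hm with heq | heq | ⟨hn, hne1, hne2, hne3, hne4, hne5⟩
      · rw [heq]
        exact ⟨hMverts hqaV hqanpa hqanepb, hMverts haV hanpa hanpb⟩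
      · rw [heq]
        exact ⟨hMverts hqbV hqbnpa hqbnpb, hMverts hbV hbnpa hbnpb⟩
      · obtain ⟨huV, hvV⟩ := hN.1 _ hn
        have hu1 : u ≠ pa := by
          intro h; subst h
          exact hne2 (by rw [hchildpa v hn])
        have hu2 : u ≠ pb := by
          intro h; subst h
          rcases hchildpb v hn with rfl | rfl
          · exact hne1 rfl
          · exact hne4 rfl
        have hv1 : v ≠ pa := by
          intro h; subst h
          rcases hparentpa u hn with rfl | rfl
          · exact hne3 rfl
          · exact hne1 rfl
        have hv2 : v ≠ pb := by
          intro h; subst h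
          have := hparentpb u hn
          subst this
          exact hne5 rfl
        exact ⟨hMverts huV hu1 hu2, hMverts hvV hv1 hv2⟩
    · rintro ⟨u, v⟩ hm
      rcases (hMmem u v).1 hm with heq | heq | ⟨hn, -⟩
      · rw [heq]
        exact hqana
      · rw [heq]
        exact hqbnb
      · exact hN.2.1 _ hn
    · intro v hcyc
      refine hN.2.2.1 v (transGen_lift ?_ hcyc)
      intro s t h
      rcases (hMmem s t).1 h with heq | heq | ⟨hn, -⟩
      · injection heq with he1 he2
        rw [he1, he2]
        exact TransGen.tail (TransGen.single hqapa) hpaa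
      · injection heq with he1 he2
        rw [he1, he2]
        exact TransGen.tail (TransGen.single hqbpb) hpbb
      · exact TransGen.single hn
    · intro v hv
      rw [hMv, Finset.mem_sdiff] at hv
      obtain ⟨hvN, hvne⟩ := hv
      simp only [Finset.mem_insert, Finset.mem_singleton, not_or] at hvne
      obtain ⟨e1, e2⟩ := hdeg v hvne.1 hvne.2
      rw [e1, e2]
      exact hN.2.2.2 v hvN
  · -- a is a sink of M
    refine ⟨hMverts haV hanpa hanpb, houtsink a haout⟩
  · -- sink transfer
    intro x hxV hxo
    have h1 : x ≠ pa := by intro h; rw [h] at hxo; omega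
    have h2 : x ≠ pb := by intro h; rw [h] at hxo; omega
    exact ⟨hMverts hxV h1 h2, houtsink x hxo⟩
  · -- TreeChild lift
    intro hTCM hnBad v hvV hvout
    by_cases hv1 : v = pa
    · have hv1' := hv1.symm; subst hv1'
      exact ⟨a, hpaa, Or.inr ⟨haV, hain, haout⟩⟩
    by_cases hv2 : v = pb
    · have hv2' := hv2.symm; subst hv2'
      exact ⟨b, hpbb, Or.inr ⟨hbV, hbin, hbout⟩⟩
    by_cases hv4 : v = qb
    · have hv4' := hv4.symm; subst hv4'
      exact ⟨pb, hqbpb, Or.inl ⟨hpbV, hpbin, hpbout⟩⟩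
    by_cases hv3 : v = qa
    · have hv3' := hv3.symm; subst hv3'
      -- qa is not a reticulation
      have hq2 : N.outDeg qa = 2 := by
        rcases hN.2.2.2 qa hqaV with ⟨h, h'⟩ | ⟨h, h'⟩ | ⟨h, h'⟩ | ⟨h, h'⟩ | ⟨h, h'⟩
        · omega
        · have := one_le_outDeg hqapa; omega
        · omega
        · -- reticulation: contradiction with ¬ BadLeaf M a
          exfalso
          obtain ⟨e1, e2⟩ := hdeg qa hqanpa hqanepb
          exact hnBad ⟨qa, hqaaM, Or.inl ⟨hMverts hqaV hqanpa hqanepb, by omega, by omega⟩⟩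
        · have := one_le_outDeg hqapa; omega
      obtain ⟨c, hcne, hc⟩ := exists_other_child hq2 hqapa
      have hcnpb : c ≠ pb := by
        intro h; subst h
        exact hv4 (hparentpb qa hc)
      have hcna : c ≠ a := by
        intro h; subst h
        exact hqaaN hc
      have hcM : (qa, c) ∈ M.arcs := hkeep hc hqanpa hqanepb hcne hcnpb
      have hcV : c ∈ N.verts := (hN.1 _ hc).2
      have hcMV : c ∈ M.verts := hMverts hcV hcne hcnpb
      obtain ⟨e1, e2⟩ := hdeg c hcne hcnpb
      have hcnotret : ¬ (N.inDeg c = 2 ∧ N.outDeg c = 1) := by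
        rintro ⟨hc2, hc1⟩
        exact hnBad ⟨qa, hqaaM, Or.inr ⟨c, hcna, hcM, hcMV, by omega, by omega⟩⟩
      have hcin := one_le_inDeg hc
      refine ⟨c, hc, ?_⟩
      rcases hN.2.2.2 c hcV with ⟨h, h'⟩ | ⟨h, h'⟩ | ⟨h, h'⟩ | ⟨h, h'⟩ | ⟨h, h'⟩
      · omega
      · exact Or.inr ⟨hcV, h, h'⟩
      · exact Or.inl ⟨hcV, h, h'⟩
      · exact absurd ⟨h, h'⟩ hcnotret
      · omega
    · -- generic vertex
      have hvM : v ∈ M.verts := hMverts hvV hv1 hv2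
      have houtM : M.outDeg v = N.outDeg v := (hdeg v hv1 hv2).2
      obtain ⟨c, hcM, hcs⟩ := hTCM v hvM (by rw [houtM]; exact hvout)
      rcases (hMmem v c).1 hcM with heq | heq | ⟨hcN, -⟩
      · exfalso; injection heq with he1 he2; exact hv3 he1
      · exfalso; injection heq with he1 he2; exact hv4 he1
      · have hc1 : c ≠ pa := by
          intro h; subst h
          rcases hparentpa v hcN with rfl | rfl
          · exact hv3 rfl
          · exact hv2 rfl
        have hc2 : c ≠ pb := by
          intro h; subst h
          exact hv4 (hparentpb v hcN)
        obtain ⟨e1, e2⟩ := hdeg c hc1 hc2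
        have hcV : c ∈ N.verts := (hN.1 _ hcN).2
        refine ⟨c, hcN, ?_⟩
        rcases hcs with ⟨-, h1, h2⟩ | ⟨-, h1, h2⟩
        · exact Or.inl ⟨hcV, by omega, by omega⟩
        · exact Or.inr ⟨hcV, by omega, by omega⟩
  · -- BadLeaf forwarding
    rintro x hxo hxa hxb ⟨q, hqx, hbad⟩
    have hx1 : x ≠ pa := by intro h; rw [h] at hxo; omega
    have hx2 : x ≠ pb := by intro h; rw [h] at hxo; omega
    have hq1 : q ≠ pa := by
      intro h; subst h
      exact hxa (hchildpa x hqx)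
    have hq2 : q ≠ pb := by
      intro h; subst h
      rcases hchildpb x hqx with rfl | rfl
      · exact hx1 rfl
      · exact hxb rfl
    have hqxM : (q, x) ∈ M.arcs := hkeep hqx hq1 hq2 hx1 hx2
    rcases hbad with ⟨hqV, hqi, hqo⟩ | ⟨c, hcx, hqc, hcV, hci, hco⟩
    · obtain ⟨e1, e2⟩ := hdeg q hq1 hq2
      exact Or.inl ⟨q, hqxM, Or.inl ⟨hMverts hqV hq1 hq2, by omega, by omega⟩⟩
    · by_cases hc1 : c = pa
      · rcases hparentpa q (hc1 ▸ hqc) with h | h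
        · exact Or.inr ⟨qa, h ▸ hqxM, hqaaM⟩
        · exact absurd h hq2
      by_cases hc2 : c = pb
      · rw [hc2] at hci
        omega
      · have hqcM : (q, c) ∈ M.arcs := hkeep hqc hq1 hq2 hc1 hc2
        obtain ⟨e1, e2⟩ := hdeg c hc1 hc2
        exact Or.inl ⟨q, hqxM, Or.inr ⟨c, hcx, hqcM, hMverts hcV hc1 hc2, by omega, by omega⟩⟩
  · -- sibling transfer
    intro x y q hxo hyo hxa hxb hya hyb hqx hqy
    have hx1 : x ≠ pa := by intro h; rw [h] at hxo; omega
    have hx2 : x ≠ pb := by intro h; rw [h] at hxo; omega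
    have hy1 : y ≠ pa := by intro h; rw [h] at hyo; omega
    have hy2 : y ≠ pb := by intro h; rw [h] at hyo; omega
    have hq1 : q ≠ pa := by
      intro h; subst h
      exact hxa (hchildpa x hqx)
    have hq2 : q ≠ pb := by
      intro h; subst h
      rcases hchildpb x hqx with rfl | rfl
      · exact hx1 rfl
      · exact hxb rfl
    exact ⟨hkeep hqx hq1 hq2 hx1 hx2, hkeep hqy hq1 hq2 hy1 hy2⟩

end TCProof
namespace TCProof

open Relation

lemma main_induction : ∀ (k : ℕ) (Ns : ℕ → DNet) (rs : ℕ → Pick) (S : Finset ℕ),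
    Net (Ns 0) → RCherrySeq Ns rs k → (Ns k).SingleVertex → TreeChildSeq rs k →
    Prot (Ns 0) rs k S →
    (Ns 0).TreeChild ∧ (∀ x ∈ S, ¬ BadLeaf (Ns 0) x) ∧
    (∀ x ∈ S, ∀ y ∈ S, x ≠ y → ∀ q, (q, x) ∈ (Ns 0).arcs → (q, y) ∈ (Ns 0).arcs → False) := by
  intro k
  induction k with
  | zero =>
    intro Ns rs S hN hseq hcomp htc hprot
    obtain ⟨hc, ha⟩ := hcomp
    refine ⟨?_, ?_, ?_⟩
    · intro v hv hout
      exfalso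
      apply hout
      simp [DNet.outDeg, ha]
    · rintro x hx ⟨q, hqx, -⟩
      rw [ha] at hqx
      exact absurd hqx (Finset.notMem_empty _)
    · intro x hx y hy hxy q hqx hqy
      rw [ha] at hqx
      exact absurd hqx (Finset.notMem_empty _)
  | succ k ih =>
    intro Ns rs S hN hseq hcomp htc hprot
    have h0 : RStep (Ns 0) (Ns 1) (rs 0) := hseq 0 (Nat.succ_pos k)
    have hseq' : RCherrySeq (fun i => Ns (i + 1)) (fun i => rs (i + 1)) k :=
      fun i hi => hseq (i + 1) (by omega)
    have hcomp' : ((fun i => Ns (i + 1)) k).SingleVertex := hcomp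
    have htc' := treeChildSeq_shift htc
    have hFO0 : ∀ x, (rs 0).Contains x → FirstOcc rs (k + 1) x 0 :=
      fun x hx => ⟨Nat.succ_pos k, hx, fun l hl => absurd hl (Nat.not_lt_zero l)⟩
    cases hpick : rs 0 with
    | cherry a b =>
      rw [hpick] at h0
      have hred : RReduceCherry (Ns 0) (Ns 1) a b := h0
      obtain ⟨hNetM, hTClift, hfwd, ⟨hnba, hnbb⟩, hsib, hsibab, hsinks⟩ := cherry_case hN hred
      set S' : Finset ℕ := (S.erase a).erase b with hS'
      have hS'mem : ∀ x ∈ S', x ∈ S ∧ x ≠ a ∧ x ≠ b := by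
        intro x hx
        rw [hS'] at hx
        have h1 := Finset.ne_of_mem_erase hx
        have h2 := Finset.mem_of_mem_erase hx
        exact ⟨Finset.mem_of_mem_erase h2, Finset.ne_of_mem_erase h2, h1⟩
      have hS'in : ∀ x ∈ S, x ≠ a → x ≠ b → x ∈ S' := by
        intro x hx h1 h2
        rw [hS']
        exact Finset.mem_erase.2 ⟨h2, Finset.mem_erase.2 ⟨h1, hx⟩⟩
      have hnc : ∀ x, x ≠ a → x ≠ b → ¬ (rs 0).Contains x := by
        intro x h1 h2 hc
        rw [hpick] at hc
        rcases hc with h | h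
        · exact h1 h.symm
        · exact h2 h.symm
      have hprot' : Prot (Ns 1) (fun i => rs (i + 1)) k S' := by
        refine ⟨?_, ?_, ?_, ?_⟩
        · intro x hx
          obtain ⟨hxS, h1, h2⟩ := hS'mem x hx
          obtain ⟨hxV, hxo⟩ := hprot.1 x hxS
          exact hsinks x hxV hxo h1 h2
        · intro x hx j hFO
          obtain ⟨hxS, h1, h2⟩ := hS'mem x hx
          exact hprot.2.1 x hxS (j + 1) (firstOcc_shift (hnc x h1 h2) hFO)
        · intro x hx y hy hxy j hFx hFy
          obtain ⟨hxS, hx1, hx2⟩ := hS'mem x hx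
          obtain ⟨hyS, hy1, hy2⟩ := hS'mem y hy
          exact hprot.2.2.1 x hxS y hyS hxy (j + 1)
            (firstOcc_shift (hnc x hx1 hx2) hFx) (firstOcc_shift (hnc y hy1 hy2) hFy)
        · intro x hx i j hret hsucc hFO
          obtain ⟨hxS, h1, h2⟩ := hS'mem x hx
          exact hprot.2.2.2 x hxS (i + 1) (j + 1) hret (succAt_shift hsucc)
            (firstOcc_shift (hnc x h1 h2) hFO)
      obtain ⟨hTCM, hBadM, hSibM⟩ := ih (fun i => Ns (i + 1)) (fun i => rs (i + 1)) S'
        hNetM hseq' hcomp' htc' hprot'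
      refine ⟨hTClift hTCM, ?_, ?_⟩
      · intro x hxS hbad
        rcases eq_or_ne x a with rfl | hxa
        · exact hnba hbad
        rcases eq_or_ne x b with rfl | hxb
        · exact hnbb hbad
        exact hBadM x (hS'in x hxS hxa hxb) (hfwd x (hprot.1 x hxS).2 hxa hxb hbad)
      · intro x hxS y hyS hxy q hqx hqy
        have hxo := (hprot.1 x hxS).2
        have hyo := (hprot.1 y hyS).2
        have hcontra : ∀ u v : ℕ, u ∈ S → v ∈ S → u ≠ v → u = a → v = b → False := by
          intro u v hu hv huv hua hvb
          subst hua; subst hvb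
          refine hprot.2.2.1 u hu v hv huv 0 (hFO0 u ?_) (hFO0 v ?_)
          · rw [hpick]; exact Or.inl rfl
          · rw [hpick]; exact Or.inr rfl
        rcases eq_or_ne x a with hxa | hxa
        · exact hcontra x y hxS hyS hxy hxa ((hsibab x y q hxy hqx hqy).1 hxa)
        rcases eq_or_ne x b with hxb | hxb
        · exact hcontra y x hyS hxS hxy.symm ((hsibab x y q hxy hqx hqy).2 hxb) hxb
        rcases eq_or_ne y a with hya | hya
        · exact hcontra y x hyS hxS hxy.symm hya ((hsibab y x q hxy.symm hqy hqx).1 hya)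
        rcases eq_or_ne y b with hyb | hyb
        · exact hcontra x y hxS hyS hxy ((hsibab y x q hxy.symm hqy hqx).2 hyb) hyb
        · obtain ⟨h1M, h2M⟩ := hsib x y q hxo hyo hxa hxb hya hyb hqx hqy
          exact hSibM x (hS'in x hxS hxa hxb) y (hS'in y hyS hya hyb) hxy q h1M h2M
    | ret a b =>
      rw [hpick] at h0
      have hred : RReduceRetCherry (Ns 0) (Ns 1) a b := h0
      obtain ⟨hNetM, ⟨haMV, haMo⟩, hsinks, hTClift, hfwd, hsib⟩ := ret_case hN hred
      have haS : a ∉ S := by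
        intro h
        have := hprot.2.1 a h 0 (hFO0 a (by rw [hpick]; exact Or.inl rfl))
        rw [hpick] at this
        exact this
      have hbS : b ∉ S := by
        intro h
        have := hprot.2.1 b h 0 (hFO0 b (by rw [hpick]; exact Or.inr rfl))
        rw [hpick] at this
        exact this
      set S' : Finset ℕ := insert a S with hS'
      have hnc : ∀ x, x ≠ a → x ≠ b → ¬ (rs 0).Contains x := by
        intro x h1 h2 hc
        rw [hpick] at hc
        rcases hc with h | h
        · exact h1 h.symm
        · exact h2 h.symm
      have hmemS' : ∀ x ∈ S', x = a ∨ (x ∈ S ∧ x ≠ a ∧ x ≠ b) := by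
        intro x hx
        rw [hS', Finset.mem_insert] at hx
        rcases hx with rfl | hx
        · exact Or.inl rfl
        · refine Or.inr ⟨hx, ?_, ?_⟩
          · intro h; subst h; exact haS hx
          · intro h; subst h; exact hbS hx
      have hfst : (rs 0).fst = a := by rw [hpick]; rfl
      have hretp : (rs 0).IsRetPair := by rw [hpick]; trivial
      have hprot' : Prot (Ns 1) (fun i => rs (i + 1)) k S' := by
        refine ⟨?_, ?_, ?_, ?_⟩
        · intro x hx
          rcases hmemS' x hx with rfl | ⟨hxS, -, -⟩
          · exact ⟨haMV, haMo⟩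
          · obtain ⟨hxV, hxo⟩ := hprot.1 x hxS
            exact hsinks x hxV hxo
        · intro x hx j hFO
          rcases hmemS' x hx with rfl | ⟨hxS, h1, h2⟩
          · exact htc.1 0 (j + 1) hretp (succAt_zero_of_firstOcc hfst hFO)
          · exact hprot.2.1 x hxS (j + 1) (firstOcc_shift (hnc x h1 h2) hFO)
        · intro x hx y hy hxy j hFx hFy
          rcases hmemS' x hx with rfl | ⟨hxS, hx1, hx2⟩
          · rcases hmemS' y hy with rfl | ⟨hyS, hy1, hy2⟩
            · exact hxy rfl
            · exact hprot.2.2.2 y hyS 0 (j + 1) hretp (succAt_zero_of_firstOcc hfst hFx)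
                (firstOcc_shift (hnc y hy1 hy2) hFy)
          · rcases hmemS' y hy with rfl | ⟨hyS, hy1, hy2⟩
            · exact hprot.2.2.2 x hxS 0 (j + 1) hretp (succAt_zero_of_firstOcc hfst hFy)
                (firstOcc_shift (hnc x hx1 hx2) hFx)
            · exact hprot.2.2.1 x hxS y hyS hxy (j + 1)
                (firstOcc_shift (hnc x hx1 hx2) hFx) (firstOcc_shift (hnc y hy1 hy2) hFy)
        · intro x hx i j hret hsucc hFO
          rcases hmemS' x hx with rfl | ⟨hxS, h1, h2⟩
          · exact htc.2 0 (i + 1) (j + 1) (by omega) hretp hret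
              (succAt_zero_of_firstOcc hfst hFO) (succAt_shift hsucc)
          · exact hprot.2.2.2 x hxS (i + 1) (j + 1) hret (succAt_shift hsucc)
              (firstOcc_shift (hnc x h1 h2) hFO)
      obtain ⟨hTCM, hBadM, hSibM⟩ := ih (fun i => Ns (i + 1)) (fun i => rs (i + 1)) S'
        hNetM hseq' hcomp' htc' hprot'
      have haS' : a ∈ S' := by rw [hS']; exact Finset.mem_insert_self a S
      have hSsub : ∀ x ∈ S, x ∈ S' := by
        intro x hx
        rw [hS']
        exact Finset.mem_insert_of_mem hx
      have hBadMa : ¬ BadLeaf (Ns 1) a := hBadM a haS'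
      refine ⟨hTClift hTCM hBadMa, ?_, ?_⟩
      · intro x hxS hbad
        have hxa : x ≠ a := by intro h; subst h; exact haS hxS
        have hxb : x ≠ b := by intro h; subst h; exact hbS hxS
        rcases hfwd x (hprot.1 x hxS).2 hxa hxb hbad with hbadM | ⟨q, hqxM, hqaM⟩
        · exact hBadM x (hSsub x hxS) hbadM
        · exact hSibM x (hSsub x hxS) a haS' hxa q hqxM hqaM
      · intro x hxS y hyS hxy q hqx hqy
        have hxa : x ≠ a := by intro h; subst h; exact haS hxS
        have hxb : x ≠ b := by intro h; subst h; exact hbS hxS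
        have hya : y ≠ a := by intro h; subst h; exact haS hyS
        have hyb : y ≠ b := by intro h; subst h; exact hbS hyS
        obtain ⟨h1M, h2M⟩ := hsib x y q (hprot.1 x hxS).2 (hprot.1 y hyS).2 hxa hxb hya hyb hqx hqy
        exact hSibM x (hSsub x hxS) y (hSsub y hyS) hxy q h1M h2M

end TCProof
/-- Lemma 1: If there is a tree-child cherry-picking sequence associated
with a complete cherry-reduction sequence for the rooted binary phylogenetic network
`Ns 0`, then `Ns 0` is tree-child. -/
theorem treeChild_of_treeChild_sequence (X : Finset ℕ) (Ns : ℕ → DNet) (rs : ℕ → Pick)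
    (k : ℕ) (hR : IsRootedBinaryNet (Ns 0) X) (hseq : RCherrySeq Ns rs k)
    (hcomp : (Ns k).SingleVertex) (htc : TreeChildSeq rs k) :
    (Ns 0).TreeChild := by
  have hprot : TCProof.Prot (Ns 0) rs k ∅ := by
    refine ⟨?_, ?_, ?_, ?_⟩ <;> simp
  exact (TCProof.main_induction k Ns rs ∅ (TCProof.net_of_isRootedBinaryNet hR)
    hseq hcomp htc hprot).1
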